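/- Let 𝒫 be a monic polynomial of degree n over ℂ with coefficient of Z^{n-1} equal to 0 (p₁ = 0), and suppose 𝒬 is a monic polynomial of degree n satisfying A_𝒫(z,w)A_𝒫(-z,-w) = A_𝒬(z,w)A_𝒬(-z,-w). Then 𝒬 = 𝒫 or 𝒬 = 𝒫ˇ. -/

import Mathlib

open Polynomial

noncomputable def checkPoly (P : Polynomial ℂ) : Polynomial ℂ :=
  ((-1 : ℂ) ^ P.natDegree) • P.comp (-Polynomial.X)

noncomputable def ambPoly (P : Polynomial ℂ) (z w : ℂ) : ℂ :=
  ∑ m ∈ Finset.range (P.natDegree + 1),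
    (1 / (Nat.factorial m : ℂ)) * ((derivative^[m] P).eval z) *
      ((derivative^[m] (P.map (starRingEnd ℂ))).eval w)

namespace Stmt11Aux

noncomputable def nx (f : Polynomial ℂ) : Polynomial ℂ := f.comp (-X)

lemma nx_coeff (f : Polynomial ℂ) (k : ℕ) : (nx f).coeff k = (-1 : ℂ)^k * f.coeff k := by
  unfold nx
  induction f using Polynomial.induction_on' with
  | add p q hp hq => simp [add_comp, hp, hq, mul_add]
  | monomial i a =>
      rw [← C_mul_X_pow_eq_monomial, mul_comp, C_comp, X_pow_comp]
      have : (-X : Polynomial ℂ)^i = C ((-1:ℂ)^i) * X^i := by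
        rw [neg_pow]; simp [C_pow]
      rw [this, coeff_C_mul, coeff_C_mul, coeff_X_pow, coeff_C_mul, coeff_X_pow]
      by_cases h : i = k
      · subst h; simp [mul_comm]
      · simp [h, Ne.symm h]

lemma nx_eval (f : Polynomial ℂ) (w : ℂ) : (nx f).eval w = f.eval (-w) := by
  unfold nx; rw [eval_comp]; simp

lemma nx_mul (f g : Polynomial ℂ) : nx (f * g) = nx f * nx g := mul_comp f g _
lemma nx_add (f g : Polynomial ℂ) : nx (f + g) = nx f + nx g := add_comp
lemma nx_sub (f g : Polynomial ℂ) : nx (f - g) = nx f - nx g := sub_comp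
lemma nx_C (a : ℂ) : nx (C a) = C a := C_comp
lemma nx_zero : nx 0 = 0 := zero_comp
lemma nx_smul (a : ℂ) (f : Polynomial ℂ) : nx (a • f) = a • nx f := smul_comp a f _

lemma nx_nx (f : Polynomial ℂ) : nx (nx f) = f := by
  ext k
  rw [nx_coeff, nx_coeff, ← mul_assoc, ← mul_pow]
  simp

lemma nx_natDegree (f : Polynomial ℂ) : (nx f).natDegree = f.natDegree := by
  unfold nx
  rw [natDegree_comp]
  simp

lemma nx_derivative (f : Polynomial ℂ) : derivative (nx f) = - nx (derivative f) := by
  unfold nx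
  rw [derivative_comp]
  simp

lemma coeff_mul_near {f g : Polynomial ℂ} {a b : ℕ} (hf : f.natDegree ≤ a + 1)
    (hg : g.natDegree ≤ b + 1) :
    (f * g).coeff (a + b + 1) = f.coeff (a+1) * g.coeff b + f.coeff a * g.coeff (b+1) := by
  rw [coeff_mul, Finset.Nat.sum_antidiagonal_eq_sum_range_succ_mk]
  have hsub : ({a, a+1} : Finset ℕ) ⊆ Finset.range (a + b + 1 + 1) := by
    intro i hi; simp at hi; rcases hi with rfl | rfl <;> simp <;> omega
  rw [← Finset.sum_subset hsub]
  · rw [Finset.sum_pair (by omega : a ≠ a + 1)]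
    have h1 : a + b + 1 - a = b + 1 := by omega
    have h2 : a + b + 1 - (a+1) = b := by omega
    rw [h1, h2]; ring
  · intro i hi hni
    simp at hi hni
    rcases lt_or_ge (a+1) i with hlt | hle
    · have : f.coeff i = 0 := coeff_eq_zero_of_natDegree_lt (lt_of_le_of_lt hf hlt)
      rw [this, zero_mul]
    · have hia : i < a := by omega
      have : g.coeff (a + b + 1 - i) = 0 := by
        apply coeff_eq_zero_of_natDegree_lt
        omega
      rw [this, mul_zero]

lemma wronskian_prop {u v : Polynomial ℂ} (hv : v ≠ 0)
    (h : derivative u * v = u * derivative v) : ∃ c : ℂ, u = C c * v := by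
  rcases eq_or_ne u 0 with rfl | hu
  · exact ⟨0, by simp⟩
  set g := EuclideanDomain.gcd u v with hg
  have hgne : g ≠ 0 := by
    rw [hg, Ne, EuclideanDomain.gcd_eq_zero_iff]
    rintro ⟨rfl, -⟩; exact hu rfl
  obtain ⟨u₁, hu₁⟩ : g ∣ u := EuclideanDomain.gcd_dvd_left u v
  obtain ⟨v₁, hv₁⟩ : g ∣ v := EuclideanDomain.gcd_dvd_right u v
  have hbez : g = u * EuclideanDomain.gcdA u v + v * EuclideanDomain.gcdB u v :=
    EuclideanDomain.gcd_eq_gcd_ab u v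
  have hco : IsCoprime u₁ v₁ := by
    refine ⟨EuclideanDomain.gcdA u v, EuclideanDomain.gcdB u v, ?_⟩
    have : g * 1 = g * (EuclideanDomain.gcdA u v * u₁ + EuclideanDomain.gcdB u v * v₁) := by
      rw [mul_one]
      calc g = u * EuclideanDomain.gcdA u v + v * EuclideanDomain.gcdB u v := hbez
      _ = g * (EuclideanDomain.gcdA u v * u₁ + EuclideanDomain.gcdB u v * v₁) := by
          rw [hu₁, hv₁]; ring
    exact (mul_left_cancel₀ hgne this).symm
  have hw1 : derivative u₁ * v₁ = u₁ * derivative v₁ := by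
    have hexp : g * (derivative g * u₁ * v₁ + g * (derivative u₁ * v₁))
        = g * (derivative g * u₁ * v₁ + g * (u₁ * derivative v₁)) := by
      have h' := h
      rw [hu₁, hv₁] at h'
      simp only [derivative_mul] at h'
      ring_nf at h' ⊢
      linear_combination h'
    have := mul_left_cancel₀ hgne hexp
    have := add_left_cancel this
    exact mul_left_cancel₀ hgne this
  have hu₁ne : u₁ ≠ 0 := by rintro rfl; rw [mul_zero] at hu₁; exact hu (hu₁)
  have hv₁ne : v₁ ≠ 0 := by rintro rfl; rw [mul_zero] at hv₁; exact hv (hv₁)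
  have hdu₁ : derivative u₁ = 0 := by
    by_contra hne
    have hdvd : u₁ ∣ derivative u₁ :=
      hco.dvd_of_dvd_mul_right ⟨derivative v₁, hw1⟩
    have h1 : u₁.natDegree ≤ (derivative u₁).natDegree := natDegree_le_of_dvd hdvd hne
    have h2 : (derivative u₁).natDegree < u₁.natDegree := by
      apply natDegree_derivative_lt
      intro h0
      rw [eq_C_of_natDegree_eq_zero h0] at hne
      simp at hne
    omega
  have hdv₁ : derivative v₁ = 0 := by
    rw [hdu₁, zero_mul] at hw1
    rcases mul_eq_zero.1 hw1.symm with h0 | h0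
    · exact absurd h0 hu₁ne
    · exact h0
  obtain ⟨c₁, hc₁⟩ : ∃ c, u₁ = C c := ⟨u₁.coeff 0, eq_C_of_derivative_eq_zero hdu₁⟩
  obtain ⟨c₂, hc₂⟩ : ∃ c, v₁ = C c := ⟨v₁.coeff 0, eq_C_of_derivative_eq_zero hdv₁⟩
  have hc₂ne : c₂ ≠ 0 := by rintro rfl; rw [hc₂] at hv₁ne; simp at hv₁ne
  refine ⟨c₁ / c₂, ?_⟩
  rw [hu₁, hv₁, hc₁, hc₂]
  have hcc : c₁ / c₂ * c₂ = c₁ := div_mul_cancel₀ _ hc₂ne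
  calc g * C c₁ = g * C (c₁ / c₂ * c₂) := by rw [hcc]
  _ = C (c₁ / c₂) * (g * C c₂) := by rw [C_mul]; ring



noncomputable def cpoly (R : Polynomial ℂ) (k : ℕ) : Polynomial ℂ :=
  ∑ m ∈ Finset.range (R.natDegree + 1),
    (((Nat.factorial m : ℂ))⁻¹ * ((derivative^[m] (R.map (starRingEnd ℂ))).coeff k)) •
      derivative^[m] R

noncomputable def wpoly (R : Polynomial ℂ) (z : ℂ) : Polynomial ℂ :=
  ∑ m ∈ Finset.range (R.natDegree + 1),
    C ((Nat.factorial m : ℂ)⁻¹ * ((derivative^[m] R).eval z)) *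
      derivative^[m] (R.map (starRingEnd ℂ))

lemma eval_wpoly (R : Polynomial ℂ) (z w : ℂ) : (wpoly R z).eval w = ambPoly R z w := by
  unfold wpoly ambPoly
  rw [eval_finset_sum]
  refine Finset.sum_congr rfl fun m _ => ?_
  rw [eval_mul, eval_C, one_div]

lemma coeff_wpoly (R : Polynomial ℂ) (z : ℂ) (k : ℕ) :
    (wpoly R z).coeff k = (cpoly R k).eval z := by
  unfold wpoly cpoly
  rw [finset_sum_coeff, eval_finset_sum]
  refine Finset.sum_congr rfl fun m _ => ?_
  rw [coeff_C_mul, eval_smul]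
  simp only [smul_eq_mul]
  ring

lemma key_id {Rp Rq : Polynomial ℂ}
    (h : ∀ z w : ℂ, ambPoly Rp z w * ambPoly Rp (-z) (-w)
        = ambPoly Rq z w * ambPoly Rq (-z) (-w)) (N : ℕ) :
    (∑ kl ∈ Finset.HasAntidiagonal.antidiagonal N, C ((-1:ℂ)^kl.2) * (cpoly Rp kl.1 * nx (cpoly Rp kl.2)))
    = ∑ kl ∈ Finset.HasAntidiagonal.antidiagonal N, C ((-1:ℂ)^kl.2) * (cpoly Rq kl.1 * nx (cpoly Rq kl.2)) := by
  have step1 : ∀ z : ℂ, wpoly Rp z * nx (wpoly Rp (-z)) = wpoly Rq z * nx (wpoly Rq (-z)) := by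
    intro z
    apply Polynomial.funext
    intro w
    rw [eval_mul, eval_mul, eval_wpoly, eval_wpoly, nx_eval, nx_eval, eval_wpoly, eval_wpoly]
    exact h z w
  apply Polynomial.funext
  intro z
  have h2 := congrArg (fun f => Polynomial.coeff f N) (step1 z)
  simp only [coeff_mul] at h2
  have conv : ∀ R : Polynomial ℂ,
      (∑ kl ∈ Finset.HasAntidiagonal.antidiagonal N, (wpoly R z).coeff kl.1 * (nx (wpoly R (-z))).coeff kl.2)
      = eval z (∑ kl ∈ Finset.HasAntidiagonal.antidiagonal N,
          C ((-1:ℂ)^kl.2) * (cpoly R kl.1 * nx (cpoly R kl.2))) := by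
    intro R
    rw [eval_finset_sum]
    refine Finset.sum_congr rfl fun kl _ => ?_
    rw [nx_coeff, coeff_wpoly, coeff_wpoly, eval_mul, eval_C, eval_mul, nx_eval]
    ring
  rw [conv Rp, conv Rq] at h2
  exact h2



lemma coeff_conj_iter (R : Polynomial ℂ) (m k : ℕ) :
    (derivative^[m] (R.map (starRingEnd ℂ))).coeff k
      = ((k+m).descFactorial m : ℂ) * (starRingEnd ℂ) (R.coeff (k+m)) := by
  rw [coeff_iterate_derivative, coeff_map, nsmul_eq_mul]

lemma cpoly_eq_zero {R : Polynomial ℂ} {k : ℕ} (hk : R.natDegree < k) : cpoly R k = 0 := by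
  unfold cpoly
  refine Finset.sum_eq_zero fun m _ => ?_
  rw [coeff_conj_iter]
  have : R.coeff (k + m) = 0 := coeff_eq_zero_of_natDegree_lt (by omega)
  rw [this]
  simp

lemma cpoly_top {R : Polynomial ℂ} (hR : R.Monic) : cpoly R R.natDegree = R := by
  unfold cpoly
  rw [Finset.sum_eq_single 0]
  · rw [coeff_conj_iter]
    simp only [Nat.add_zero, Nat.descFactorial_zero, Nat.cast_one, one_mul,
      Nat.factorial_zero, Nat.cast_one, inv_one, Function.iterate_zero_apply]
    rw [hR.coeff_natDegree]
    simp
  · intro m _ hm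
    rw [coeff_conj_iter]
    have : R.coeff (R.natDegree + m) = 0 := coeff_eq_zero_of_natDegree_lt (by omega)
    rw [this]
    simp
  · intro habs
    simp at habs

lemma cpoly_sub1 {R : Polynomial ℂ} {m : ℕ} (hR : R.Monic) (hn : R.natDegree = m + 2) :
    cpoly R (m+1) = C ((starRingEnd ℂ) (R.coeff (m+1))) * R
      + C ((m+2 : ℂ)) * derivative R := by
  unfold cpoly
  rw [hn]
  have hsub : ({0, 1} : Finset ℕ) ⊆ Finset.range (m + 2 + 1) := by
    intro i hi; simp at hi; rcases hi with rfl | rfl <;> simp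
  rw [← Finset.sum_subset hsub]
  · rw [Finset.sum_pair (by omega : (0:ℕ) ≠ 1)]
    rw [coeff_conj_iter, coeff_conj_iter]
    have e0 : R.coeff (m + 1 + 0) = R.coeff (m+1) := by norm_num
    have e1 : R.coeff (m + 1 + 1) = 1 := by
      have : m + 1 + 1 = R.natDegree := by omega
      rw [this, hR.coeff_natDegree]
    rw [e0, e1]
    simp only [Nat.descFactorial_zero, Nat.descFactorial_one, Nat.factorial_zero,
      Nat.factorial_one, Function.iterate_zero_apply, Function.iterate_one, map_one]
    rw [smul_eq_C_mul, smul_eq_C_mul]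
    push_cast
    ring_nf
  · intro i hi hni
    simp at hi hni
    rw [coeff_conj_iter]
    have : R.coeff (m + 1 + i) = 0 := by
      apply coeff_eq_zero_of_natDegree_lt; omega
    rw [this]
    simp

lemma cpoly_sub2 {R : Polynomial ℂ} {m : ℕ} (hR : R.Monic) (hn : R.natDegree = m + 2) :
    cpoly R m = C ((starRingEnd ℂ) (R.coeff m)) * R
      + C ((m+1 : ℂ) * (starRingEnd ℂ) (R.coeff (m+1))) * derivative R
      + C (((m+2 : ℂ) * (m+1)) / 2) * derivative (derivative R) := by
  unfold cpoly
  rw [hn]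
  have hsub : ({0, 1, 2} : Finset ℕ) ⊆ Finset.range (m + 2 + 1) := by
    intro i hi; simp at hi; rcases hi with rfl | rfl | rfl <;> simp
  rw [← Finset.sum_subset hsub]
  · have h01 : (0:ℕ) ∉ ({1, 2} : Finset ℕ) := by decide
    have h12 : (1:ℕ) ∉ ({2} : Finset ℕ) := by decide
    rw [show ({0,1,2} : Finset ℕ) = insert 0 {1,2} by rfl, Finset.sum_insert h01,
      show ({1,2} : Finset ℕ) = insert 1 {2} by rfl, Finset.sum_insert h12,
      Finset.sum_singleton]
    rw [coeff_conj_iter, coeff_conj_iter, coeff_conj_iter]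
    have e1 : R.coeff (m + 1) = R.coeff (m+1) := rfl
    have e2 : R.coeff (m + 2) = 1 := by
      have : m + 2 = R.natDegree := by omega
      rw [this, hR.coeff_natDegree]
    rw [show m + 0 = m by ring, show m + 1 = m + 1 by rfl, show m + 2 = m + 2 by rfl, e2]
    have hdesc2 : ((m+2).descFactorial 2 : ℂ) = (m+2) * (m+1) := by
      rw [Nat.descFactorial_succ, Nat.descFactorial_one]
      push_cast
      ring
    simp only [Nat.descFactorial_zero, Nat.descFactorial_one, Nat.factorial_zero,
      Nat.factorial_one, Nat.factorial_two, Function.iterate_zero_apply, Function.iterate_one,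
      map_one, Nat.cast_one, inv_one, one_mul]
    rw [hdesc2]
    rw [show derivative^[2] R = derivative (derivative R) by
      rw [Function.iterate_succ_apply', Function.iterate_one]]
    rw [smul_eq_C_mul, smul_eq_C_mul, smul_eq_C_mul]
    push_cast
    ring_nf
  · intro i hi hni
    simp at hi hni
    rw [coeff_conj_iter]
    have : R.coeff (m + i) = 0 := by
      apply coeff_eq_zero_of_natDegree_lt; omega
    rw [this]
    simp

lemma collapse_top {R : Polynomial ℂ} (hR : R.Monic) {n : ℕ} (hn : R.natDegree = n) :
    (∑ kl ∈ Finset.HasAntidiagonal.antidiagonal (2*n), C ((-1:ℂ)^kl.2) * (cpoly R kl.1 * nx (cpoly R kl.2)))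
      = C ((-1:ℂ)^n) * (R * nx R) := by
  rw [Finset.sum_eq_single (n, n)]
  · have : cpoly R n = R := by rw [← hn]; exact cpoly_top hR
    rw [this]
  · rintro ⟨k, l⟩ hkl hne
    rw [Finset.HasAntidiagonal.mem_antidiagonal] at hkl
    simp only at hkl ⊢
    have hne' : ¬(k = n ∧ l = n) := by
      intro ⟨h1, h2⟩; exact hne (by rw [h1, h2])
    have hbig : n < k ∨ n < l := by omega
    rcases hbig with hk | hl
    · rw [cpoly_eq_zero (by omega), zero_mul, mul_zero]
    · rw [cpoly_eq_zero (by omega : R.natDegree < l), nx_zero, mul_zero, mul_zero]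
  · intro habs
    rw [Finset.HasAntidiagonal.mem_antidiagonal] at habs
    simp at habs
    omega

lemma collapse_sub {R : Polynomial ℂ} (hR : R.Monic) {m : ℕ} (hn : R.natDegree = m+2) :
    (∑ kl ∈ Finset.HasAntidiagonal.antidiagonal (2*m+2),
        C ((-1:ℂ)^kl.2) * (cpoly R kl.1 * nx (cpoly R kl.2)))
      = C ((-1:ℂ)^m) * (cpoly R m * nx (cpoly R (m+2))
          - cpoly R (m+1) * nx (cpoly R (m+1)) + cpoly R (m+2) * nx (cpoly R m)) := by
  have hsub : ({(m, m+2), (m+1, m+1), (m+2, m)} : Finset (ℕ × ℕ))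
      ⊆ Finset.HasAntidiagonal.antidiagonal (2*m+2) := by
    intro kl hkl
    simp at hkl
    rw [Finset.HasAntidiagonal.mem_antidiagonal]
    rcases hkl with rfl | rfl | rfl <;> simp <;> omega
  rw [← Finset.sum_subset hsub]
  · have h1 : ((m, m+2) : ℕ × ℕ) ∉ ({(m+1, m+1), (m+2, m)} : Finset (ℕ × ℕ)) := by
      simp
    have h2 : ((m+1, m+1) : ℕ × ℕ) ∉ ({(m+2, m)} : Finset (ℕ × ℕ)) := by
      simp
    rw [show ({(m, m+2), (m+1, m+1), (m+2, m)} : Finset (ℕ × ℕ))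
        = insert (m, m+2) {(m+1, m+1), (m+2, m)} by rfl, Finset.sum_insert h1,
      show ({(m+1, m+1), (m+2, m)} : Finset (ℕ × ℕ)) = insert (m+1,m+1) {(m+2, m)} by rfl,
      Finset.sum_insert h2, Finset.sum_singleton]
    have hs1 : ((-1:ℂ))^(m+2) = (-1:ℂ)^m := by rw [pow_add]; norm_num
    have hs2 : ((-1:ℂ))^(m+1) = -(-1:ℂ)^m := by rw [pow_add]; norm_num
    simp only [hs1, hs2]
    rw [map_neg]
    ring
  · rintro ⟨k, l⟩ hkl hne
    rw [Finset.HasAntidiagonal.mem_antidiagonal] at hkl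
    simp only at hkl
    simp only [Finset.mem_insert, Finset.mem_singleton, Prod.mk.injEq, not_or, not_and] at hne
    have hbig : m + 2 < k ∨ m + 2 < l := by omega
    rcases hbig with hk | hl
    · rw [cpoly_eq_zero (by omega), zero_mul, mul_zero]
    · rw [cpoly_eq_zero (by omega : R.natDegree < l), nx_zero, mul_zero, mul_zero]



lemma derive_L1 {P Q : Polynomial ℂ} {m : ℕ} (hP : P.Monic) (hQ : Q.Monic)
    (hPn : P.natDegree = m+2) (hQn : Q.natDegree = m+2) (hp1 : P.coeff (m+1) = 0)
    (hI : Q * nx Q = P * nx P)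
    (hT : cpoly Q m * nx (cpoly Q (m+2)) - cpoly Q (m+1) * nx (cpoly Q (m+1))
            + cpoly Q (m+2) * nx (cpoly Q m)
        = cpoly P m * nx (cpoly P (m+2)) - cpoly P (m+1) * nx (cpoly P (m+1))
            + cpoly P (m+2) * nx (cpoly P m)) :
    Q.coeff (m+1) = 0 ∧ derivative Q * nx (derivative Q) = derivative P * nx (derivative P) := by
  have hQtop : cpoly Q (m+2) = Q := by rw [← hQn]; exact cpoly_top hQ
  have hPtop : cpoly P (m+2) = P := by rw [← hPn]; exact cpoly_top hP
  set α : ℂ := (starRingEnd ℂ) (Q.coeff (m+1)) with hα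
  set β : ℂ := (starRingEnd ℂ) (Q.coeff m) with hβ
  set βp : ℂ := (starRingEnd ℂ) (P.coeff m) with hβp
  have hQ1 : cpoly Q (m+1) = C α * Q + C ((m+2:ℂ)) * derivative Q := cpoly_sub1 hQ hQn
  have hP1 : cpoly P (m+1) = C ((m+2:ℂ)) * derivative P := by
    rw [cpoly_sub1 hP hPn, hp1]; simp
  have hQ2 : cpoly Q m = C β * Q + C ((m+1:ℂ) * α) * derivative Q
      + C (((m+2:ℂ)*(m+1))/2) * derivative (derivative Q) := cpoly_sub2 hQ hQn
  have hP2 : cpoly P m = C βp * P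
      + C (((m+2:ℂ)*(m+1))/2) * derivative (derivative P) := by
    rw [cpoly_sub2 hP hPn, hp1]; simp [hβp]
  -- second derivative of hI
  have hI2 : derivative (derivative Q) * nx Q - 2 * (derivative Q * nx (derivative Q))
      + Q * nx (derivative (derivative Q))
      = derivative (derivative P) * nx P - 2 * (derivative P * nx (derivative P))
      + P * nx (derivative (derivative P)) := by
    have h1 := congrArg derivative (congrArg derivative hI)
    simp only [derivative_mul, nx_derivative, derivative_add, derivative_neg, derivative_sub,
      mul_neg, neg_mul] at h1
    linear_combination h1
  -- expand hT
  rw [hQtop, hPtop, hQ1, hP1, hQ2, hP2] at hT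
  simp only [nx_add, nx_mul, nx_C] at hT
  -- main identity
  set δ : ℂ := 2*β - α^2 - 2*βp with hδ
  have hMAIN : C δ * (Q * nx Q)
      - C α * (Q * nx (derivative Q) + derivative Q * nx Q)
      - C ((m+2:ℂ)) * (derivative Q * nx (derivative Q))
      + C ((m+2:ℂ)) * (derivative P * nx (derivative P)) = 0 := by
    rw [hδ]
    have hγpoly : (C (((m:ℂ)+2) * ((m:ℂ)+1) / 2) : Polynomial ℂ) * 2
        = ((m : Polynomial ℂ)+2) * ((m : Polynomial ℂ)+1) := by
      rw [show ((2:Polynomial ℂ)) = C (2:ℂ) from (map_ofNat C 2).symm, ← C_mul,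
        div_mul_cancel₀ _ (two_ne_zero), map_mul, map_add, map_add, map_natCast]
      norm_num
    simp only [map_add, map_sub, map_mul, map_pow, map_ofNat, map_one,
      map_natCast] at hT ⊢
    linear_combination hT - C (((m:ℂ)+2)*((m:ℂ)+1)/2) * hI2 - (2 * C βp) * hI
      - (derivative Q * nx (derivative Q) - derivative P * nx (derivative P)) * hγpoly
  -- corner at 2m+4
  have hdegQ : Q.natDegree ≤ m + 2 := le_of_eq hQn
  have hdegnxQ : (nx Q).natDegree ≤ m + 2 := by rw [nx_natDegree]; exact hdegQ
  have hdegdQ : (derivative Q).natDegree ≤ m + 1 := by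
    have := natDegree_derivative_le Q
    omega
  have hdegnxdQ : (nx (derivative Q)).natDegree ≤ m + 1 := by
    rw [nx_natDegree]; exact hdegdQ
  have hdegP : P.natDegree ≤ m + 2 := le_of_eq hPn
  have hdegdP : (derivative P).natDegree ≤ m + 1 := by
    have := natDegree_derivative_le P
    omega
  have hdegnxdP : (nx (derivative P)).natDegree ≤ m + 1 := by
    rw [nx_natDegree]; exact hdegdP
  have hcQQ : (Q * nx Q).coeff (2*m+4) = (-1:ℂ)^m := by
    have : 2*m+4 = (m+2) + (m+2) := by ring
    rw [this, coeff_mul_add_eq_of_natDegree_le hdegQ hdegnxQ, nx_coeff]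
    rw [show Q.coeff (m+2) = 1 from hQn ▸ hQ.coeff_natDegree]
    rw [pow_add]
    norm_num
  have hzQd : (Q * nx (derivative Q)).coeff (2*m+4) = 0 := by
    apply coeff_eq_zero_of_natDegree_lt
    calc (Q * nx (derivative Q)).natDegree ≤ Q.natDegree + (nx (derivative Q)).natDegree :=
          natDegree_mul_le
    _ < 2*m+4 := by omega
  have hzdQ : (derivative Q * nx Q).coeff (2*m+4) = 0 := by
    apply coeff_eq_zero_of_natDegree_lt
    calc (derivative Q * nx Q).natDegree ≤ (derivative Q).natDegree + (nx Q).natDegree :=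
          natDegree_mul_le
    _ < 2*m+4 := by omega
  have hzdd : (derivative Q * nx (derivative Q)).coeff (2*m+4) = 0 := by
    apply coeff_eq_zero_of_natDegree_lt
    calc (derivative Q * nx (derivative Q)).natDegree
        ≤ (derivative Q).natDegree + (nx (derivative Q)).natDegree := natDegree_mul_le
    _ < 2*m+4 := by omega
  have hzddP : (derivative P * nx (derivative P)).coeff (2*m+4) = 0 := by
    apply coeff_eq_zero_of_natDegree_lt
    calc (derivative P * nx (derivative P)).natDegree
        ≤ (derivative P).natDegree + (nx (derivative P)).natDegree := natDegree_mul_le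
    _ < 2*m+4 := by omega
  have hδ0 : δ = 0 := by
    have hco := congrArg (fun f => Polynomial.coeff f (2*m+4)) hMAIN
    simp only [coeff_add, coeff_sub, coeff_C_mul, coeff_zero, hcQQ, hzdd, hzddP, hzQd, hzdQ,
      mul_zero, add_zero, sub_zero, zero_add] at hco
    have : δ * (-1:ℂ)^m = 0 := by linear_combination hco
    rcases mul_eq_zero.1 this with h0 | h0
    · exact h0
    · exact absurd h0 (pow_ne_zero _ (by norm_num))
  -- corner at 2m+2
  have hq1 : Q.coeff (m+1) = 0 := by
    have hco := congrArg (fun f => Polynomial.coeff f (2*m+2)) hMAIN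
    simp only [coeff_add, coeff_sub, coeff_C_mul, coeff_zero] at hco
    have e1 : (Q * nx (derivative Q)).coeff (2*m+2) = -((-1:ℂ)^m * Q.coeff (m+1)) := by
      have hix : 2*m+2 = (m+1) + m + 1 := by ring
      rw [hix, coeff_mul_near hdegQ hdegnxdQ]
      simp only [nx_coeff, coeff_derivative]
      rw [show Q.coeff (m+1+1) = 1 from by
        rw [show m+1+1 = m+2 by ring]; exact hQn ▸ hQ.coeff_natDegree]
      push_cast
      ring
    have e2 : (derivative Q * nx Q).coeff (2*m+2) = -((-1:ℂ)^m * Q.coeff (m+1)) := by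
      have hix : 2*m+2 = m + (m+1) + 1 := by ring
      rw [hix, coeff_mul_near hdegdQ hdegnxQ]
      simp only [nx_coeff, coeff_derivative]
      rw [show Q.coeff (m+1+1) = 1 from by
        rw [show m+1+1 = m+2 by ring]; exact hQn ▸ hQ.coeff_natDegree]
      push_cast
      ring
    have e3 : (derivative Q * nx (derivative Q)).coeff (2*m+2)
        = (-1:ℂ)^(m+1) * (m+2)^2 := by
      have hix : 2*m+2 = (m+1) + (m+1) := by ring
      rw [hix, coeff_mul_add_eq_of_natDegree_le hdegdQ hdegnxdQ]
      simp only [nx_coeff, coeff_derivative]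
      rw [show Q.coeff (m+1+1) = 1 from by
        rw [show m+1+1 = m+2 by ring]; exact hQn ▸ hQ.coeff_natDegree]
      push_cast
      ring
    have e4 : (derivative P * nx (derivative P)).coeff (2*m+2)
        = (-1:ℂ)^(m+1) * (m+2)^2 := by
      have hix : 2*m+2 = (m+1) + (m+1) := by ring
      rw [hix, coeff_mul_add_eq_of_natDegree_le hdegdP hdegnxdP]
      simp only [nx_coeff, coeff_derivative]
      rw [show P.coeff (m+1+1) = 1 from by
        rw [show m+1+1 = m+2 by ring]; exact hPn ▸ hP.coeff_natDegree]
      push_cast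
      ring
    simp only [hδ0, coeff_add, coeff_sub, coeff_C_mul, coeff_zero, e1, e2, e3, e4,
      zero_mul, zero_sub, zero_add] at hco
    have : α * ((-1:ℂ)^m * Q.coeff (m+1)) = 0 := by linear_combination ((1:ℂ)/2) * hco
    have h2 : α * Q.coeff (m+1) = 0 := by
      rcases mul_eq_zero.1 this with h0 | h0
      · rw [h0, zero_mul]
      · rcases mul_eq_zero.1 h0 with h1 | h1
        · exact absurd h1 (pow_ne_zero _ (by norm_num))
        · rw [h1, mul_zero]
    rw [hα] at h2
    rcases mul_eq_zero.1 h2 with h0 | h0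
    · exact (_root_.map_eq_zero (starRingEnd ℂ)).mp h0
    · exact h0
  refine ⟨hq1, ?_⟩
  have hα0 : α = 0 := by rw [hα, hq1, map_zero]
  rw [hδ0, hα0] at hMAIN
  simp only [map_zero, zero_mul, zero_sub] at hMAIN
  have hν : ((m:ℂ)+2) ≠ 0 := by
    have h2 : ((m+2 : ℕ):ℂ) ≠ 0 := Nat.cast_ne_zero.mpr (by omega)
    push_cast at h2
    exact h2
  have hkey : C ((m:ℂ)+2) * (derivative Q * nx (derivative Q))
      = C ((m:ℂ)+2) * (derivative P * nx (derivative P)) := by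
    linear_combination -hMAIN
  exact mul_left_cancel₀ (C_ne_zero.mpr hν) hkey



lemma two_nz : (2 : Polynomial ℂ) ≠ 0 := by
  have h : ((2:ℕ) : Polynomial ℂ) ≠ 0 := Nat.cast_ne_zero.mpr (by omega)
  simpa using h

lemma endgame {P Q : Polynomial ℂ} {n : ℕ} (hP : P.Monic) (hQ : Q.Monic)
    (hPn : P.natDegree = n) (hQn : Q.natDegree = n)
    (hI : Q * nx Q = P * nx P)
    (hL1 : derivative Q * nx (derivative Q) = derivative P * nx (derivative P)) :
    Q = P ∨ Q = checkPoly P := by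
  have hQc : Q.coeff n = 1 := hQn ▸ hQ.coeff_natDegree
  have hPc : P.coeff n = 1 := hPn ▸ hP.coeff_natDegree
  -- final-step helpers
  have finP : (2:Polynomial ℂ) * Q = 2 * P → Q = P ∨ Q = checkPoly P := by
    intro h2
    exact Or.inl (mul_left_cancel₀ two_nz h2)
  have finNx : (2:Polynomial ℂ) * Q = 2 * nx P → Q = P ∨ Q = checkPoly P := by
    intro h2
    have hQnx : Q = nx P := mul_left_cancel₀ two_nz h2
    right
    have hcoef := congrArg (fun f => Polynomial.coeff f n) hQnx
    simp only [nx_coeff, hQc, hPc, mul_one] at hcoef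
    unfold checkPoly
    rw [hPn, ← hcoef, one_smul]
    exact hQnx
  have finNegNx : (2:Polynomial ℂ) * Q = 2 * (-nx P) → Q = P ∨ Q = checkPoly P := by
    intro h2
    have hQnx : Q = -nx P := mul_left_cancel₀ two_nz h2
    right
    have hcoef := congrArg (fun f => Polynomial.coeff f n) hQnx
    simp only [coeff_neg, nx_coeff, hQc, hPc, mul_one] at hcoef
    unfold checkPoly
    rw [hPn, show ((-1:ℂ)^n) = -1 from by linear_combination hcoef]
    rw [hQnx, neg_one_smul]
    rfl
  have finNegP : (2:Polynomial ℂ) * Q = 2 * (-P) → Q = P ∨ Q = checkPoly P := by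
    intro h2
    have hQnx : Q = -P := mul_left_cancel₀ two_nz h2
    have hcoef := congrArg (fun f => Polynomial.coeff f n) hQnx
    simp only [coeff_neg, hQc, hPc] at hcoef
    exact absurd hcoef (by norm_num)
  by_cases hF : (Q + nx Q) * (Q + nx Q) - (P + nx P) * (P + nx P) = 0
  · -- F = 0 case : conclude
    have hF2 : (Q + nx Q) * (Q + nx Q) - (P + nx P) * (P + nx P)
        = (Q - nx Q) * (Q - nx Q) - (P - nx P) * (P - nx P) := by
      linear_combination 4 * hI
    have hAa : ((Q + nx Q) - (P + nx P)) * ((Q + nx Q) + (P + nx P)) = 0 := by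
      linear_combination hF
    have hBb : ((Q - nx Q) - (P - nx P)) * ((Q - nx Q) + (P - nx P)) = 0 := by
      linear_combination hF - hF2
    rcases mul_eq_zero.1 hAa with h1 | h1 <;> rcases mul_eq_zero.1 hBb with h2 | h2
    · exact finP (by linear_combination h1 + h2)
    · exact finNx (by linear_combination h1 + h2)
    · exact finNegNx (by linear_combination h1 + h2)
    · exact finNegP (by linear_combination h1 + h2)
  · -- F ≠ 0 case : derive contradiction
    exfalso
    have hF2 : (Q + nx Q) * (Q + nx Q) - (P + nx P) * (P + nx P)
        = (Q - nx Q) * (Q - nx Q) - (P - nx P) * (P - nx P) := by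
      linear_combination 4 * hI
    have hG : (derivative Q - nx (derivative Q)) * (derivative Q - nx (derivative Q))
          - (derivative P - nx (derivative P)) * (derivative P - nx (derivative P))
        = (derivative Q + nx (derivative Q)) * (derivative Q + nx (derivative Q))
          - (derivative P + nx (derivative P)) * (derivative P + nx (derivative P)) := by
      linear_combination (-4 : Polynomial ℂ) * hL1
    have hDD : (Q + nx Q) * (derivative Q - nx (derivative Q))
          - (P + nx P) * (derivative P - nx (derivative P))
        = (Q - nx Q) * (derivative Q + nx (derivative Q))
          - (P - nx P) * (derivative P + nx (derivative P)) := by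
      have hD := congrArg derivative hF2
      simp only [derivative_sub, derivative_add, derivative_mul, nx_derivative] at hD
      have h2 : (2:Polynomial ℂ) * ((Q + nx Q) * (derivative Q - nx (derivative Q))
          - (P + nx P) * (derivative P - nx (derivative P)))
          = 2 * ((Q - nx Q) * (derivative Q + nx (derivative Q))
          - (P - nx P) * (derivative P + nx (derivative P))) := by
        linear_combination hD
      exact mul_left_cancel₀ two_nz h2
    -- abbreviations (purely for readability in this comment):
    -- A = Q + nx Q, B = Q - nx Q, a = P + nx P, b = P - nx P
    -- dA = dQ - nx dQ, dB = dQ + nx dQ, da = dP - nx dP, db = dP + nx dP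
    -- wA = dA * a - A * da, wB = dB * b - B * db
    have hw2 : ((derivative Q - nx (derivative Q)) * (P + nx P)
            - (Q + nx Q) * (derivative P - nx (derivative P)))^2
        = ((derivative Q + nx (derivative Q)) * (P - nx P)
            - (Q - nx Q) * (derivative P + nx (derivative P)))^2 := by
      linear_combination
        ((Q + nx Q) * (derivative Q - nx (derivative Q))
          - (P + nx P) * (derivative P - nx (derivative P))
          + ((Q - nx Q) * (derivative Q + nx (derivative Q))
          - (P - nx P) * (derivative P + nx (derivative P)))) * hDD
        - ((derivative Q - nx (derivative Q)) * (derivative Q - nx (derivative Q))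
            - (derivative P - nx (derivative P)) * (derivative P - nx (derivative P))) * hF2
        - ((Q - nx Q) * (Q - nx Q) - (P - nx P) * (P - nx P)) * hG
    have hfac : (((derivative Q - nx (derivative Q)) * (P + nx P)
            - (Q + nx Q) * (derivative P - nx (derivative P)))
          - ((derivative Q + nx (derivative Q)) * (P - nx P)
            - (Q - nx Q) * (derivative P + nx (derivative P))))
        * (((derivative Q - nx (derivative Q)) * (P + nx P)
            - (Q + nx Q) * (derivative P - nx (derivative P)))
          + ((derivative Q + nx (derivative Q)) * (P - nx P)
            - (Q - nx Q) * (derivative P + nx (derivative P)))) = 0 := by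
      linear_combination hw2
    -- nonzero factors
    have hAma : (Q + nx Q) - (P + nx P) ≠ 0 := by
      intro h0; exact hF (by linear_combination ((Q + nx Q) + (P + nx P)) * h0)
    have hApa : (Q + nx Q) + (P + nx P) ≠ 0 := by
      intro h0; exact hF (by linear_combination ((Q + nx Q) - (P + nx P)) * h0)
    have hBmb : (Q - nx Q) - (P - nx P) ≠ 0 := by
      intro h0
      exact hF (by linear_combination ((Q - nx Q) + (P - nx P)) * h0 + hF2)
    have hBpb : (Q - nx Q) + (P - nx P) ≠ 0 := by
      intro h0
      exact hF (by linear_combination ((Q - nx Q) - (P - nx P)) * h0 + hF2)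
    have e2 : ((Q + nx Q) - (P + nx P)) * ((Q + nx Q) + (P + nx P))
        = ((Q - nx Q) - (P - nx P)) * ((Q - nx Q) + (P - nx P)) := by
      linear_combination hF2
    -- the common final contradiction, parameterized
    have final : ∀ Ypm : Polynomial ℂ, nx Ypm = -Ypm → Ypm ≠ 0 →
        (∀ c : ℂ, ((Q + nx Q) - (P + nx P)) * ((Q + nx Q) - (P + nx P))
            = C c * (Ypm * Ypm) → False) := by
      intro Y hY hYne c hc
      obtain ⟨d, hd⟩ := IsAlgClosed.exists_pow_nat_eq c (n := 2) (by omega)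
      have hcd : (C c : Polynomial ℂ) = C d * C d := by
        rw [← C_mul, ← hd]; ring_nf
      have h4 : (((Q + nx Q) - (P + nx P)) - C d * Y)
          * (((Q + nx Q) - (P + nx P)) + C d * Y) = 0 := by
        linear_combination hc + (Y * Y) * hcd
      have hX1nx : nx ((Q + nx Q) - (P + nx P)) = (Q + nx Q) - (P + nx P) := by
        rw [nx_sub, nx_add, nx_add, nx_nx, nx_nx]; ring
      rcases mul_eq_zero.1 h4 with h5 | h5
      · have h6 := congrArg nx h5
        rw [nx_sub, nx_mul, nx_C, hX1nx, hY, nx_zero] at h6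
        -- h6 : (X1) - C d * (-Y) = 0
        have h7 : (2:Polynomial ℂ) * ((Q + nx Q) - (P + nx P)) = 0 := by
          linear_combination h5 + h6
        exact hAma (by
          rcases mul_eq_zero.1 h7 with h8 | h8
          · exact absurd h8 two_nz
          · exact h8)
      · have h6 := congrArg nx h5
        rw [nx_add, nx_mul, nx_C, hX1nx, hY, nx_zero] at h6
        have h7 : (2:Polynomial ℂ) * ((Q + nx Q) - (P + nx P)) = 0 := by
          linear_combination h5 + h6
        exact hAma (by
          rcases mul_eq_zero.1 h7 with h8 | h8
          · exact absurd h8 two_nz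
          · exact h8)
    rcases mul_eq_zero.1 hfac with hbr | hbr
    · -- wA = wB branch
      have hww : ((derivative Q - nx (derivative Q)) * (P + nx P)
            - (Q + nx Q) * (derivative P - nx (derivative P)))
          = ((derivative Q + nx (derivative Q)) * (P - nx P)
            - (Q - nx Q) * (derivative P + nx (derivative P))) := by
        linear_combination hbr
      set u := ((Q + nx Q) - (P + nx P)) * ((Q - nx Q) + (P - nx P)) with hu
      set v := ((Q + nx Q) + (P + nx P)) * ((Q - nx Q) - (P - nx P)) with hv
      have hv0 : v ≠ 0 := mul_ne_zero hApa hBmb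
      have hu0 : u ≠ 0 := mul_ne_zero hAma hBpb
      have hw : derivative u * v = u * derivative v := by
        rw [hu, hv]
        simp only [derivative_mul, derivative_sub, derivative_add, nx_derivative]
        linear_combination
          (2 * ((Q - nx Q) * (Q - nx Q) - (P - nx P) * (P - nx P))) * hww
          - (2 * ((derivative Q + nx (derivative Q)) * (P - nx P)
            - (Q - nx Q) * (derivative P + nx (derivative P)))) * hF2
      obtain ⟨c, hc⟩ := wronskian_prop hv0 hw
      have hkey : (((Q + nx Q) - (P + nx P)) * ((Q + nx Q) - (P + nx P))
          - C c * (((Q - nx Q) - (P - nx P)) * ((Q - nx Q) - (P - nx P))))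
          * (((Q - nx Q) - (P - nx P)) * ((Q - nx Q) + (P - nx P))) = 0 := by
        rw [hu, hv] at hc
        linear_combination (((Q + nx Q) - (P + nx P)) * ((Q - nx Q) - (P - nx P))) * hc
          + (C c * (((Q - nx Q) - (P - nx P)) * ((Q - nx Q) - (P - nx P)))) * e2
      have h3 : ((Q + nx Q) - (P + nx P)) * ((Q + nx Q) - (P + nx P))
          = C c * (((Q - nx Q) - (P - nx P)) * ((Q - nx Q) - (P - nx P))) := by
        rcases mul_eq_zero.1 hkey with h | h
        · linear_combination h
        · exact absurd h (mul_ne_zero hBmb hBpb)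
      have hYnx : nx ((Q - nx Q) - (P - nx P)) = -((Q - nx Q) - (P - nx P)) := by
        rw [nx_sub, nx_sub, nx_sub, nx_nx, nx_nx]; ring
      exact final _ hYnx hBmb c h3
    · -- wA = -wB branch
      have hww : ((derivative Q - nx (derivative Q)) * (P + nx P)
            - (Q + nx Q) * (derivative P - nx (derivative P)))
          = -((derivative Q + nx (derivative Q)) * (P - nx P)
            - (Q - nx Q) * (derivative P + nx (derivative P))) := by
        linear_combination hbr
      set u := ((Q + nx Q) - (P + nx P)) * ((Q - nx Q) - (P - nx P)) with hu
      set v := ((Q + nx Q) + (P + nx P)) * ((Q - nx Q) + (P - nx P)) with hv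
      have hv0 : v ≠ 0 := mul_ne_zero hApa hBpb
      have hu0 : u ≠ 0 := mul_ne_zero hAma hBmb
      have hw : derivative u * v = u * derivative v := by
        rw [hu, hv]
        simp only [derivative_mul, derivative_sub, derivative_add, nx_derivative]
        linear_combination
          (2 * ((Q - nx Q) * (Q - nx Q) - (P - nx P) * (P - nx P))) * hww
          + (2 * ((derivative Q + nx (derivative Q)) * (P - nx P)
            - (Q - nx Q) * (derivative P + nx (derivative P)))) * hF2
      obtain ⟨c, hc⟩ := wronskian_prop hv0 hw
      have hkey : (((Q + nx Q) - (P + nx P)) * ((Q + nx Q) - (P + nx P))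
          - C c * (((Q - nx Q) + (P - nx P)) * ((Q - nx Q) + (P - nx P))))
          * (((Q - nx Q) + (P - nx P)) * ((Q - nx Q) - (P - nx P))) = 0 := by
        rw [hu, hv] at hc
        linear_combination (((Q + nx Q) - (P + nx P)) * ((Q - nx Q) + (P - nx P))) * hc
          + (C c * (((Q - nx Q) + (P - nx P)) * ((Q - nx Q) + (P - nx P)))) * e2
      have h3 : ((Q + nx Q) - (P + nx P)) * ((Q + nx Q) - (P + nx P))
          = C c * (((Q - nx Q) + (P - nx P)) * ((Q - nx Q) + (P - nx P))) := by
        rcases mul_eq_zero.1 hkey with h | h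
        · linear_combination h
        · exact absurd h (mul_ne_zero hBpb hBmb)
      have hYnx : nx ((Q - nx Q) + (P - nx P)) = -((Q - nx Q) + (P - nx P)) := by
        rw [nx_add, nx_sub, nx_sub, nx_nx, nx_nx]; ring
      exact final _ hYnx hBpb c h3



end Stmt11Aux

open Stmt11Aux

theorem stmt11 (n : ℕ) (P Q : Polynomial ℂ)
    (hP : P.Monic) (hQ : Q.Monic)
    (hPn : P.natDegree = n) (hQn : Q.natDegree = n) (hp1 : P.coeff (n - 1) = 0)
    (h : ∀ z w : ℂ, ambPoly P z w * ambPoly P (-z) (-w)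
        = ambPoly Q z w * ambPoly Q (-z) (-w)) :
    Q = P ∨ Q = checkPoly P := by
  rcases Nat.eq_zero_or_pos n with rfl | hn
  · exfalso
    have h1 : P.coeff 0 = 1 := by
      have h2 := hP.coeff_natDegree
      rwa [hPn] at h2
    rw [show (0:ℕ) - 1 = 0 from rfl] at hp1
    rw [h1] at hp1
    exact one_ne_zero hp1
  -- level 2n identity
  have hItop : C ((-1:ℂ)^n) * (P * nx P) = C ((-1:ℂ)^n) * (Q * nx Q) := by
    rw [← collapse_top hP hPn, ← collapse_top hQ hQn]
    exact key_id h (2*n)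
  have hI : Q * nx Q = P * nx P :=
    (mul_left_cancel₀ (C_ne_zero.mpr (pow_ne_zero _ (by norm_num))) hItop).symm
  -- derive L1
  have hL1 : derivative Q * nx (derivative Q) = derivative P * nx (derivative P) := by
    rcases eq_or_lt_of_le (show 1 ≤ n from hn) with h1 | h2
    · -- n = 1
      have hPn1 : P.natDegree = 1 := by omega
      have hQn1 : Q.natDegree = 1 := by omega
      have hdP : derivative P = 1 := by
        rw [hP.eq_X_add_C hPn1]
        simp
      have hdQ : derivative Q = 1 := by
        rw [hQ.eq_X_add_C hQn1]
        simp
      rw [hdP, hdQ]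
    · -- n ≥ 2
      obtain ⟨m, rfl⟩ : ∃ m, n = m + 2 := ⟨n - 2, by omega⟩
      have hp1' : P.coeff (m+1) = 0 := by
        have : m + 2 - 1 = m + 1 := by omega
        rwa [this] at hp1
      have hTtop : C ((-1:ℂ)^m) * (cpoly P m * nx (cpoly P (m+2))
            - cpoly P (m+1) * nx (cpoly P (m+1)) + cpoly P (m+2) * nx (cpoly P m))
          = C ((-1:ℂ)^m) * (cpoly Q m * nx (cpoly Q (m+2))
            - cpoly Q (m+1) * nx (cpoly Q (m+1)) + cpoly Q (m+2) * nx (cpoly Q m)) := by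
        rw [← collapse_sub hP hPn, ← collapse_sub hQ hQn]
        exact key_id h (2*m+2)
      have hT := (mul_left_cancel₀
        (C_ne_zero.mpr (pow_ne_zero _ (by norm_num : (-1:ℂ) ≠ 0))) hTtop).symm
      exact (derive_L1 hP hQ hPn hQn hp1' hI hT).2
  exact endgame hP hQ hPn hQn hI hL1
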